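/- Let G be a locally compact second countable group with a tempered strong Følner sequence (F_n), let Ω be a compact group with Haar probability measure, χ: G → Ω a continuous homomorphism, and c ∈ L∞(G) bounded by 1 satisfying condition (⊥). If for almost every ω ∈ Ω (with respect to Haar measure) one has lim_N E_{g∈F_N} c(g)φ(χ(g)ω) = 0 for a fixed φ ∈ C(Ω), then the same limit holds for every ω ∈ Ω. -/

import Mathlib

open MeasureTheory Filter Set Topology Pointwise ENNReal

/-- The correlation average `E_{g ∈ F n} c(g) c(ga)`. -/
noncomputable def corrAvg {G : Type*} [Group G] [MeasurableSpace G]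
    (μ : Measure G) (F : ℕ → Set G) (c : G → ℝ) (n : ℕ) (a : G) : ℝ :=
  (μ (F n)).toReal⁻¹ * ∫ g in F n, c g * c (g * a) ∂μ


/-- Uniform near-invariance of a continuous function on a compact group:
translations by elements close to `1` move `φ` uniformly little. -/
lemma uniform_translate_small {Ω : Type*} [Group Ω] [TopologicalSpace Ω]
    [IsTopologicalGroup Ω] [CompactSpace Ω]
    (φ : Ω → ℝ) (hφ : Continuous φ) {ε : ℝ} (hε : 0 < ε) :
    ∃ U : Set Ω, IsOpen U ∧ (1:Ω) ∈ U ∧ ∀ v ∈ U, ∀ x : Ω, |φ x - φ (x * v)| < ε := by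
  have hc : Continuous fun p : Ω × Ω => φ (p.1 * p.2) :=
    hφ.comp (continuous_fst.mul continuous_snd)
  have hmem : ∀ x : Ω, ∃ U V : Set Ω, IsOpen U ∧ IsOpen V ∧ x ∈ U ∧ (1:Ω) ∈ V ∧
      ∀ y ∈ U, ∀ v ∈ V, |φ (y * v) - φ x| < ε/2 := by
    intro x
    have hO : IsOpen {p : Ω × Ω | |φ (p.1 * p.2) - φ x| < ε/2} :=
      isOpen_lt ((hc.sub continuous_const).abs) continuous_const
    have hx : ((x, (1:Ω)) : Ω × Ω) ∈ {p : Ω × Ω | |φ (p.1 * p.2) - φ x| < ε/2} := by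
      simp only [Set.mem_setOf_eq, mul_one, sub_self, abs_zero]
      linarith
    obtain ⟨U, V, hUo, hVo, hxU, h1V, hUV⟩ := isOpen_prod_iff.1 hO x 1 hx
    exact ⟨U, V, hUo, hVo, hxU, h1V, fun y hy v hv => hUV (Set.mk_mem_prod hy hv)⟩
  choose U V hUo hVo hxU h1V hUV using hmem
  obtain ⟨t, ht⟩ := isCompact_univ.elim_finite_subcover U hUo
    (fun x _ => Set.mem_iUnion.2 ⟨x, hxU x⟩)
  refine ⟨⋂ x ∈ t, V x, isOpen_biInter_finset (fun x _ => hVo x), ?_, ?_⟩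
  · exact Set.mem_iInter₂.2 fun x _ => h1V x
  · intro v hv x
    obtain ⟨i, hit, hxi⟩ : ∃ i ∈ t, x ∈ U i := by
      have := ht (Set.mem_univ x)
      simpa using this
    have h1 : |φ (x * 1) - φ i| < ε/2 := hUV i x hxi 1 (h1V i)
    have h2 : |φ (x * v) - φ i| < ε/2 := hUV i x hxi v (Set.mem_iInter₂.1 hv i hit)
    rw [mul_one] at h1
    calc |φ x - φ (x * v)| = |(φ x - φ i) - (φ (x * v) - φ i)| := by ring_nf
      _ ≤ |φ x - φ i| + |φ (x * v) - φ i| := abs_sub _ _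
      _ < ε := by linarith

/-- Let `(F n)` be a tempered strong Følner sequence in a lcsc group `G`,
`Ω` a compact group with Haar probability measure `P`, `χ : G → Ω` a continuous
homomorphism, `φ ∈ C(Ω)`, and `c ∈ L∞(G)` bounded by 1 satisfying condition (⊥).
If `lim_N E_{g ∈ F N} c(g) φ(χ(g) ω) = 0` for `P`-a.e. `ω`, then the same limit holds
for every `ω ∈ Ω`. -/
theorem ae_to_everywhere_compact_group
    {G : Type*} [Group G] [TopologicalSpace G] [IsTopologicalGroup G]
    [LocallyCompactSpace G] [SecondCountableTopology G]
    [MeasurableSpace G] [BorelSpace G]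
    (μ : Measure G) [μ.IsHaarMeasure]
    (F : ℕ → Set G) (hFcomp : ∀ n, IsCompact (F n)) (hFpos : ∀ n, 0 < μ (F n))
    (hstrong : ∀ Kc : Set G, IsCompact Kc →
      Tendsto (fun n => μ ((Kc⁻¹ * F n) ∩ (Kc⁻¹ * (F n)ᶜ)) / μ (F n)) atTop (𝓝 0))
    (C : ℝ≥0∞) (hC : C ≠ ⊤)
    (htemp : ∀ j : ℕ, μ (⋃ i, ⋃ _ : i < j, (F i)⁻¹ * F j) < C * μ (F j))
    (c : G → ℝ) (hcm : Measurable c) (hc1 : ∀ g, |c g| ≤ 1)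
    (hperp : ∀ δ > (0:ℝ), ∃ N₀ : ℕ, ∀ L R : ℕ, N₀ ≤ L → L ≤ R →
      1 - δ < liminf (fun N =>
        (μ ({a : G | ∀ n, L ≤ n → n ≤ R → |corrAvg μ F c n a| < δ} ∩ F N)).toReal
          / (μ (F N)).toReal) atTop)
    {Ω : Type*} [Group Ω] [TopologicalSpace Ω] [IsTopologicalGroup Ω]
    [CompactSpace Ω] [SecondCountableTopology Ω] [MeasurableSpace Ω] [BorelSpace Ω]
    (P : Measure Ω) [P.IsHaarMeasure] [IsProbabilityMeasure P]
    (χ : G →* Ω) (hχ : Continuous χ)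
    (φ : Ω → ℝ) (hφ : Continuous φ)
    (hae : ∀ᵐ ω ∂P,
      Tendsto (fun N => (μ (F N)).toReal⁻¹ * ∫ g in F N, c g * φ (χ g * ω) ∂μ)
        atTop (𝓝 0)) :
    ∀ ω : Ω,
      Tendsto (fun N => (μ (F N)).toReal⁻¹ * ∫ g in F N, c g * φ (χ g * ω) ∂μ)
        atTop (𝓝 0) := by
  classical
  -- bound for φ
  obtain ⟨M, hM⟩ : ∃ M : ℝ, ∀ x : Ω, ‖φ x‖ ≤ M := by
    obtain ⟨M, hM⟩ := isCompact_univ.exists_bound_of_continuousOn hφ.continuousOn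
    exact ⟨M, fun x => hM x (mem_univ x)⟩
  -- the set of good ω is dense
  set S : Set Ω := {ω | Tendsto (fun N => (μ (F N)).toReal⁻¹ * ∫ g in F N, c g * φ (χ g * ω) ∂μ)
      atTop (𝓝 0)} with hS
  have hSdense : Dense S := by
    rw [dense_iff_inter_open]
    intro U hU hUne
    by_contra hemp
    have hUS : U ⊆ Sᶜ := fun x hx => fun hxS => hemp ⟨x, hx, hxS⟩
    have : P U = 0 := measure_mono_null hUS (by simpa [hS, ae_iff, Set.compl_setOf] using hae)
    exact absurd this (hU.measure_ne_zero P hUne)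
  intro ω
  rw [Metric.tendsto_atTop]
  intro ε hε
  have h3 : (0:ℝ) < ε / 3 := by linarith
  obtain ⟨U, hUopen, hUone, hUsub⟩ := uniform_translate_small φ hφ h3
  -- find good ω' near ω
  have hWopen : IsOpen {y : Ω | ω⁻¹ * y ∈ U} := hUopen.preimage (continuous_const.mul continuous_id)
  obtain ⟨ω', hω'W, hω'S⟩ := (dense_iff_inter_open.1 hSdense) _ hWopen ⟨ω, by simp [hUone]⟩
  have hv : ω⁻¹ * ω' ∈ U := hω'W
  have hclose : ∀ x : Ω, |φ x - φ (x * (ω⁻¹ * ω'))| < ε/3 := fun x => hUsub _ hv x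
  -- key bound on averages
  have hbound : ∀ N : ℕ,
      |((μ (F N)).toReal⁻¹ * ∫ g in F N, c g * φ (χ g * ω) ∂μ)
        - ((μ (F N)).toReal⁻¹ * ∫ g in F N, c g * φ (χ g * ω') ∂μ)| ≤ ε/3 := by
    intro N
    have hfin : μ (F N) < ∞ := (hFcomp N).measure_lt_top
    have htRpos : 0 < (μ (F N)).toReal := ENNReal.toReal_pos (hFpos N).ne' hfin.ne
    have hmeas : ∀ w : Ω, AEStronglyMeasurable (fun g => c g * φ (χ g * w)) (μ.restrict (F N)) := by
      intro w
      exact ((hcm.mul ((hφ.comp ((hχ.mul continuous_const) : Continuous fun g => χ g * w)).measurable)).aestronglyMeasurable)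
    have hint : ∀ w : Ω, IntegrableOn (fun g => c g * φ (χ g * w)) (F N) μ := by
      intro w
      refine Measure.integrableOn_of_bounded (M := M) hfin.ne
        ((hcm.mul ((hφ.comp ((hχ.mul continuous_const) : Continuous fun g => χ g * w)).measurable)).aestronglyMeasurable) ?_
      filter_upwards with g
      calc ‖c g * φ (χ g * w)‖ = |c g| * ‖φ (χ g * w)‖ := by
            rw [norm_mul]; rfl
        _ ≤ 1 * M := mul_le_mul (hc1 g) (hM _) (norm_nonneg _) zero_le_one
        _ = M := one_mul M
    rw [← mul_sub, ← integral_sub (hint ω) (hint ω'), abs_mul,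
      abs_of_nonneg (inv_nonneg.2 ENNReal.toReal_nonneg)]
    have hnorm : ‖∫ g in F N, (c g * φ (χ g * ω) - c g * φ (χ g * ω')) ∂μ‖
        ≤ (ε/3) * (μ (F N)).toReal := by
      refine norm_setIntegral_le_of_norm_le_const_ae hfin ?_
      filter_upwards with g
      have hx : χ g * ω' = (χ g * ω) * (ω⁻¹ * ω') := by group
      calc ‖c g * φ (χ g * ω) - c g * φ (χ g * ω')‖
          = |c g| * |φ (χ g * ω) - φ (χ g * ω')| := by
            rw [← mul_sub, Real.norm_eq_abs, abs_mul]
        _ ≤ 1 * (ε/3) := by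
            refine mul_le_mul (hc1 g) ?_ (abs_nonneg _) zero_le_one
            rw [hx]
            exact (hclose (χ g * ω)).le
        _ = ε/3 := one_mul _
    calc (μ (F N)).toReal⁻¹ * |∫ g in F N, (c g * φ (χ g * ω) - c g * φ (χ g * ω')) ∂μ|
        ≤ (μ (F N)).toReal⁻¹ * ((ε/3) * (μ (F N)).toReal) := by
          exact mul_le_mul_of_nonneg_left hnorm (inv_nonneg.2 ENNReal.toReal_nonneg)
      _ = ε/3 := by
          field_simp
  -- conclude
  have hω'tendsto : Tendsto (fun N => (μ (F N)).toReal⁻¹ * ∫ g in F N, c g * φ (χ g * ω') ∂μ)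
      atTop (𝓝 0) := hω'S
  rw [Metric.tendsto_atTop] at hω'tendsto
  obtain ⟨N₀, hN₀⟩ := hω'tendsto (ε/3) h3
  refine ⟨N₀, fun N hN => ?_⟩
  have h1 := hbound N
  have h2 := hN₀ N hN
  rw [Real.dist_eq, sub_zero] at h2 ⊢
  have h4 := abs_sub_abs_le_abs_sub ((μ (F N)).toReal⁻¹ * ∫ g in F N, c g * φ (χ g * ω) ∂μ)
    ((μ (F N)).toReal⁻¹ * ∫ g in F N, c g * φ (χ g * ω') ∂μ)
  linarith
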